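/- arXiv:2006.13020 — 3 statements merged into one kernel-verified Lean document; each statement's English description precedes it below -/
import Mathlib

section
/- Let (A, d) be a commutative differential graded algebra over ℂ and d^c a degree-one derivation on A with (d^c)² = 0, d d^c + d^c d = 0, satisfying: (i) ker d ∩ ker d^c ∩ Im d = Im(d d^c), and (ii) ker d ∩ ker d^c ∩ Im d^c = Im(d d^c). Then the inclusion (ker d^c, d) ↪ (A, d) induces an isomorphism on d-cohomology. -/
/-- If `d, dᶜ` are anticommuting square-zero differentials satisfying the two
ddᶜ-lemma conditions, then the inclusion `(ker dᶜ, d) ↪ (V, d)` induces an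
isomorphism on `d`-cohomology. -/
theorem stmt5 {V : Type*} [AddCommGroup V] [Module ℂ V]
    (d dc : V →ₗ[ℂ] V) (hd : d ∘ₗ d = 0) (hdc : dc ∘ₗ dc = 0)
    (hanti : d ∘ₗ dc + dc ∘ₗ d = 0)
    (h1 : LinearMap.ker d ⊓ LinearMap.ker dc ⊓ LinearMap.range d =
      LinearMap.range (d ∘ₗ dc))
    (h2 : LinearMap.ker d ⊓ LinearMap.ker dc ⊓ LinearMap.range dc =
      LinearMap.range (d ∘ₗ dc)) :
    ∃ f : (↥(LinearMap.ker dc ⊓ LinearMap.ker d) ⧸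
          (Submodule.map d (LinearMap.ker dc)).comap
            (LinearMap.ker dc ⊓ LinearMap.ker d).subtype) →ₗ[ℂ]
        (↥(LinearMap.ker d) ⧸ (LinearMap.range d).comap (LinearMap.ker d).subtype),
      (∀ (x : V) (hx : x ∈ LinearMap.ker dc ⊓ LinearMap.ker d)
          (hx' : x ∈ LinearMap.ker d),
          f (Submodule.Quotient.mk ⟨x, hx⟩) = Submodule.Quotient.mk ⟨x, hx'⟩) ∧
      Function.Bijective f := by
  have hdd : ∀ v, d (d v) = 0 := fun v => congrFun (congrArg DFunLike.coe hd) v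
  have hdcdc : ∀ v, dc (dc v) = 0 := fun v => congrFun (congrArg DFunLike.coe hdc) v
  have hac : ∀ v, d (dc v) + dc (d v) = 0 :=
    fun v => congrFun (congrArg DFunLike.coe hanti) v
  set K := LinearMap.ker dc ⊓ LinearMap.ker d with hKdef
  set N : Submodule ℂ K := (Submodule.map d (LinearMap.ker dc)).comap K.subtype
    with hNdef
  set N' : Submodule ℂ (LinearMap.ker d) :=
    (LinearMap.range d).comap (LinearMap.ker d).subtype with hN'def
  set g : K →ₗ[ℂ] (↥(LinearMap.ker d) ⧸ N') :=
    N'.mkQ.comp (Submodule.inclusion inf_le_right) with hgdef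
  have hgker : ∀ x : K, g x = 0 ↔ (x : V) ∈ LinearMap.range d := by
    intro x
    simp [hgdef, Submodule.Quotient.mk_eq_zero, hN'def, Submodule.inclusion]
  have hNg : N ≤ LinearMap.ker g := by
    intro x hx
    rw [LinearMap.mem_ker, hgker]
    rcases hx with ⟨y, -, hy⟩
    exact ⟨y, hy⟩
  refine ⟨N.liftQ g hNg, ?_, ?_, ?_⟩
  · intro x hx hx'
    rfl
  · -- injective
    rw [← LinearMap.ker_eq_bot, Submodule.ker_liftQ, eq_bot_iff]
    rintro y ⟨x, hx, rfl⟩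
    have hxr : (x : V) ∈ LinearMap.range d := (hgker x).mp hx
    have hx1 : (x : V) ∈ LinearMap.range (d ∘ₗ dc) := by
      rw [← h1]
      exact ⟨⟨x.2.2, x.2.1⟩, hxr⟩
    rcases hx1 with ⟨u, hu⟩
    have hxN : x ∈ N := ⟨dc u, hdcdc u, hu⟩
    simpa [Submodule.mem_bot, Submodule.Quotient.mk_eq_zero] using hxN
  · -- surjective
    intro y
    obtain ⟨x, rfl⟩ := N'.mkQ_surjective y
    have hdx : d (x : V) = 0 := x.2
    have hmem : dc (x : V) ∈ LinearMap.range (d ∘ₗ dc) := by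
      rw [← h2]
      refine ⟨⟨?_, hdcdc _⟩, ⟨_, rfl⟩⟩
      have := hac (x : V)
      rw [hdx, map_zero, add_zero] at this
      exact this
    rcases hmem with ⟨z, hz⟩
    have hydc : dc ((x : V) + d z) = 0 := by
      have h' : dc (d z) = -(d (dc z)) := eq_neg_of_add_eq_zero_right (hac z)
      rw [map_add, h', ← LinearMap.comp_apply, hz, add_neg_cancel]
    have hyd : d ((x : V) + d z) = 0 := by
      rw [map_add, hdx, hdd, add_zero]
    have hyK : (x : V) + d z ∈ K := ⟨hydc, hyd⟩
    refine ⟨Submodule.Quotient.mk ⟨(x : V) + d z, hyK⟩, ?_⟩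
    have : N.liftQ g hNg (Submodule.Quotient.mk ⟨(x : V) + d z, hyK⟩) =
        Submodule.Quotient.mk ⟨(x : V) + d z, hyd⟩ := rfl
    rw [this, Submodule.mkQ_apply, Submodule.Quotient.eq]
    refine ⟨z, ?_⟩
    simp
end

section
/- Let (A, d) be a commutative differential graded algebra and d^c a degree-one derivation with (d^c)² = 0, d d^c + d^c d = 0, satisfying ker d ∩ ker d^c ∩ Im d = Im(d d^c) and ker d ∩ ker d^c ∩ Im d^c = Im(d d^c). Then the induced differential d on the d^c-cohomology H_{d^c}(A) := ker d^c / Im d^c is zero, and the projection (ker d^c, d) → (H_{d^c}(A), 0) induces an isomorphism on d-cohomology. Consequently (A, d) is formal, i.e., connected to (H_d(A), 0) by a chain of DGA quasi-isomorphisms. -/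
/-- Under the two ddᶜ-lemma conditions, the differential induced by `d` on the
`dᶜ`-cohomology `ker dᶜ / Im dᶜ` is zero, and the projection
`(ker dᶜ, d) → (H_{dᶜ}, 0)` induces an isomorphism on `d`-cohomology
(the two quasi-isomorphisms establishing formality). -/
theorem stmt6 {V : Type*} [AddCommGroup V] [Module ℂ V]
    (d dc : V →ₗ[ℂ] V) (hd : d ∘ₗ d = 0) (hdc : dc ∘ₗ dc = 0)
    (hanti : d ∘ₗ dc + dc ∘ₗ d = 0)
    (h1 : LinearMap.ker d ⊓ LinearMap.ker dc ⊓ LinearMap.range d =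
      LinearMap.range (d ∘ₗ dc))
    (h2 : LinearMap.ker d ⊓ LinearMap.ker dc ⊓ LinearMap.range dc =
      LinearMap.range (d ∘ₗ dc)) :
    (∀ x ∈ LinearMap.ker dc, d x ∈ LinearMap.range dc) ∧
    ∃ g : (↥(LinearMap.ker dc ⊓ LinearMap.ker d) ⧸
          (Submodule.map d (LinearMap.ker dc)).comap
            (LinearMap.ker dc ⊓ LinearMap.ker d).subtype) →ₗ[ℂ]
        (↥(LinearMap.ker dc) ⧸ (LinearMap.range dc).comap (LinearMap.ker dc).subtype),
      (∀ (x : V) (hx : x ∈ LinearMap.ker dc ⊓ LinearMap.ker d),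
          g (Submodule.Quotient.mk ⟨x, hx⟩) = Submodule.Quotient.mk ⟨x, hx.1⟩) ∧
      Function.Bijective g := by
  have hdd : ∀ x : V, d (d x) = 0 := fun x => by
    have := LinearMap.ext_iff.mp hd x; simpa using this
  have hdcdc : ∀ x : V, dc (dc x) = 0 := fun x => by
    have := LinearMap.ext_iff.mp hdc x; simpa using this
  have hac : ∀ x : V, d (dc x) = - dc (d x) := fun x => by
    have := LinearMap.ext_iff.mp hanti x
    simp only [LinearMap.add_apply, LinearMap.comp_apply, LinearMap.zero_apply] at this
    exact eq_neg_of_add_eq_zero_left this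
  -- key lemma from h1
  have hkey : ∀ x : V, dc x = 0 → d x = 0 → x ∈ LinearMap.range d →
      ∃ z, d (dc z) = x := by
    intro x hx1 hx2 hx3
    have hm : x ∈ LinearMap.ker d ⊓ LinearMap.ker dc ⊓ LinearMap.range d :=
      ⟨⟨hx2, hx1⟩, hx3⟩
    rw [h1] at hm
    obtain ⟨z, hz⟩ := hm
    exact ⟨z, hz⟩
  have hkey2 : ∀ x : V, dc x = 0 → d x = 0 → x ∈ LinearMap.range dc →
      ∃ z, d (dc z) = x := by
    intro x hx1 hx2 hx3
    have hm : x ∈ LinearMap.ker d ⊓ LinearMap.ker dc ⊓ LinearMap.range dc :=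
      ⟨⟨hx2, hx1⟩, hx3⟩
    rw [h2] at hm
    obtain ⟨z, hz⟩ := hm
    exact ⟨z, hz⟩
  -- ddc-image is in range dc
  have hrange : ∀ z : V, d (dc z) ∈ LinearMap.range dc := fun z =>
    ⟨-(d z), by rw [map_neg, ← hac]⟩
  have part1 : ∀ x ∈ LinearMap.ker dc, d x ∈ LinearMap.range dc := by
    intro x hx
    have hx0 : dc x = 0 := hx
    have h3 : dc (d x) = 0 := by
      have := hac x; rw [hx0, map_zero] at this
      exact (neg_eq_zero.mp this.symm)
    obtain ⟨z, hz⟩ := hkey (d x) h3 (hdd x) ⟨x, rfl⟩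
    exact hz ▸ hrange z
  refine ⟨part1, ?_⟩
  set K := LinearMap.ker dc ⊓ LinearMap.ker d with hK
  let f : ↥K →ₗ[ℂ]
      (↥(LinearMap.ker dc) ⧸ (LinearMap.range dc).comap (LinearMap.ker dc).subtype) :=
    (Submodule.mkQ _) ∘ₗ (Submodule.inclusion (inf_le_left : K ≤ LinearMap.ker dc))
  have hfker : ∀ x : ↥K, f x = 0 ↔ (x : V) ∈ LinearMap.range dc := by
    intro x
    simp only [f, LinearMap.comp_apply, Submodule.mkQ_apply,
      Submodule.Quotient.mk_eq_zero, Submodule.mem_comap, Submodule.subtype_apply,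
      Submodule.inclusion]
    rfl
  have hN : (Submodule.map d (LinearMap.ker dc)).comap K.subtype ≤ LinearMap.ker f := by
    intro x hx
    obtain ⟨y, hy, hyx⟩ := hx
    rw [LinearMap.mem_ker, hfker]
    obtain ⟨z, hz⟩ := hkey (x : V) x.2.1 x.2.2 ⟨y, hyx⟩
    exact hz ▸ hrange z
  refine ⟨Submodule.liftQ _ f hN, ?_, ?_, ?_⟩
  · intro x hx
    rfl
  · rw [← LinearMap.ker_eq_bot]
    refine Submodule.ker_liftQ_eq_bot _ _ _ ?_
    intro x hx
    rw [LinearMap.mem_ker, hfker] at hx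
    obtain ⟨z, hz⟩ := hkey2 (x : V) x.2.1 x.2.2 hx
    exact ⟨dc z, hdcdc z, hz⟩
  · intro q
    obtain ⟨x, rfl⟩ := Submodule.mkQ_surjective _ q
    have h3 : dc (d (x : V)) = 0 := by
      have := hac (x : V); rw [x.2, map_zero] at this
      exact (neg_eq_zero.mp this.symm)
    obtain ⟨z, hz⟩ := hkey (d (x : V)) h3 (hdd _) ⟨(x : V), rfl⟩
    have hx'1 : dc ((x : V) - dc z) = 0 := by rw [map_sub, x.2, hdcdc, sub_zero]
    have hx'2 : d ((x : V) - dc z) = 0 := by rw [map_sub, hz, sub_self]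
    refine ⟨Submodule.Quotient.mk ⟨(x : V) - dc z, hx'1, hx'2⟩, ?_⟩
    have : (Submodule.liftQ _ f hN) (Submodule.Quotient.mk ⟨(x : V) - dc z, hx'1, hx'2⟩)
        = Submodule.Quotient.mk (⟨(x : V) - dc z, hx'1⟩ : ↥(LinearMap.ker dc)) := rfl
    rw [this, Submodule.mkQ_apply, Submodule.Quotient.eq]
    refine Submodule.mem_comap.mpr ?_
    simp only [Submodule.subtype_apply, AddSubgroupClass.coe_sub]
    exact ⟨-z, by simp⟩
end

section
/- Let U be an open set on which the d_φ-, ∂-, and ∂̄_φ-Poincaré lemmas hold (as in the abstract double complex setting with ∂² = ∂̄_φ² = ∂∂̄_φ + ∂̄_φ∂ = 0). Suppose θ ∈ A^{p,q}(U) with p ≥ 1, q ≥ 1 is d_φ-closed (i.e., ∂θ = ∂̄_φθ = 0, noting d_φθ has components ∂θ and ∂̄_φθ). Then θ ∈ ∂∂̄_φ A^{p-1,q-1}(U), i.e., θ = ∂∂̄_φ β for some β ∈ A^{p-1,q-1}(U). -/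
open LinearMap

private lemma sum_indep_eq_zero {ι R N : Type*} [Ring R] [AddCommGroup N] [Module R N]
    {P : ι → Submodule R N} (hP : iSupIndep P) (t : Finset ι) (g : ι → N)
    (hg : ∀ i, g i ∈ P i) (hsum : ∑ i ∈ t, g i = 0) : ∀ i ∈ t, g i = 0 := by
  classical
  intro i hi
  have h2 := Finset.add_sum_erase t g hi
  rw [hsum] at h2
  have h1 : g i = -∑ j ∈ t.erase i, g j := eq_neg_of_add_eq_zero_left h2
  have h3 : g i ∈ ⨆ (j) (_ : j ≠ i), P j := by
    rw [h1]
    exact neg_mem (Submodule.sum_mem _ fun j hj =>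
      Submodule.mem_iSup_of_mem j (Submodule.mem_iSup_of_mem (Finset.ne_of_mem_erase hj) (hg j)))
  exact (Submodule.disjoint_def.mp (iSupIndep_def.mp hP i)) _ (hg i) h3

/-- Abstract local ∂∂̄_φ-lemma (Lemma 3.1(2)(i)): in a double complex
`(A^{•,•}, ∂ = D, ∂̄_φ = E)` on which the `d_φ`-, `∂`- and `∂̄_φ`-Poincaré lemmas hold,
a `d_φ`-closed `(p,q)`-form `θ` with `p ≥ 1`, `q ≥ 1` lies in `∂∂̄_φ A^{p-1,q-1}`. -/
theorem stmt19 {V : Type*} [AddCommGroup V] [Module ℂ V]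
    (Apq : ℤ → ℤ → Submodule ℂ V)
    (hinternal : DirectSum.IsInternal (fun pq : ℤ × ℤ => Apq pq.1 pq.2))
    (D E : V →ₗ[ℂ] V)
    (hDgr : ∀ p q, ∀ x ∈ Apq p q, D x ∈ Apq (p + 1) q)
    (hEgr : ∀ p q, ∀ x ∈ Apq p q, E x ∈ Apq p (q + 1))
    (hD : D ∘ₗ D = 0) (hE : E ∘ₗ E = 0) (hDE : D ∘ₗ E + E ∘ₗ D = 0)
    -- the `d_φ`-Poincaré lemma
    (hdP : ∀ k : ℤ, 1 ≤ k → ∀ x ∈ (⨆ p : ℤ, Apq p (k - p)), (D + E) x = 0 →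
      ∃ y ∈ (⨆ p : ℤ, Apq p (k - 1 - p)), x = (D + E) y)
    -- the `∂̄_φ`-Poincaré lemma
    (hEP : ∀ p q : ℤ, 1 ≤ q → ∀ x ∈ Apq p q, E x = 0 → ∃ y ∈ Apq p (q - 1), x = E y)
    -- the `∂`-Poincaré lemma
    (hDP : ∀ p q : ℤ, 1 ≤ p → ∀ x ∈ Apq p q, D x = 0 → ∃ y ∈ Apq (p - 1) q, x = D y)
    (p q : ℤ) (hp : 1 ≤ p) (hq : 1 ≤ q)
    (θ : V) (hθ : θ ∈ Apq p q) (hθD : D θ = 0) (hθE : E θ = 0) :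
    ∃ β ∈ Apq (p - 1) (q - 1), θ = D (E β) := by
  classical
  -- basic consequences of the complex relations
  have hDD : ∀ x : V, D (D x) = 0 := fun x => by
    have := LinearMap.ext_iff.mp hD x; simpa using this
  have hEE : ∀ x : V, E (E x) = 0 := fun x => by
    have := LinearMap.ext_iff.mp hE x; simpa using this
  have hED : ∀ x : V, E (D x) = -D (E x) := fun x => by
    have := LinearMap.ext_iff.mp hDE x
    simp only [LinearMap.add_apply, LinearMap.comp_apply, LinearMap.zero_apply] at this
    exact eq_neg_of_add_eq_zero_right this
  -- degree-cast helper
  have hcast : ∀ (a a' b b' : ℤ) (x : V), a = a' → b = b' → x ∈ Apq a b → x ∈ Apq a' b' := by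
    rintro a a' b b' x rfl rfl h; exact h
  set k : ℤ := p + q with hk
  have hk1 : 1 ≤ k := by omega
  -- apply the d_φ-Poincaré lemma
  have hθsup : θ ∈ ⨆ r : ℤ, Apq r (k - r) :=
    Submodule.mem_iSup_of_mem p (hcast p p q (k - p) θ rfl (by omega) hθ)
  have hθclosed : (D + E) θ = 0 := by
    simp [LinearMap.add_apply, hθD, hθE]
  obtain ⟨y, hy, hyeq⟩ := hdP k hk1 θ hθsup hθclosed
  rw [Submodule.mem_iSup_iff_exists_finsupp] at hy
  obtain ⟨f, hf, hfsum⟩ := hy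
  -- components of (D+E)y by first degree
  set g : ℤ → V := fun s => D (f (s - 1)) + E (f s) with hgdef
  have hgmem : ∀ s : ℤ, g s ∈ Apq s (k - s) := by
    intro s
    exact add_mem
      (hcast (s - 1 + 1) s (k - 1 - (s - 1)) (k - s) _ (by ring) (by ring)
        (hDgr _ _ _ (hf (s - 1))))
      (hcast s s (k - 1 - s + 1) (k - s) _ rfl (by ring) (hEgr _ _ _ (hf s)))
  set S : Finset ℤ := (f.support ∪ f.support.image (· + 1)) ∪ {p} with hSdef
  have hsupS : f.support ⊆ S := fun a ha =>
    Finset.mem_union_left _ (Finset.mem_union_left _ ha)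
  have himgS : f.support.image (· + 1) ⊆ S := fun a ha =>
    Finset.mem_union_left _ (Finset.mem_union_right _ ha)
  have hpS : p ∈ S := Finset.mem_union_right _ (Finset.mem_singleton_self p)
  have hnotimg : ∀ s : ℤ, s ∉ f.support.image (· + 1) → f (s - 1) = 0 := by
    intro s hs
    by_contra hne
    exact hs (Finset.mem_image.mpr ⟨s - 1, Finsupp.mem_support_iff.mpr hne, by ring⟩)
  -- the sum of the components equals θ
  have hsumS : ∑ s ∈ S, g s = θ := by
    have h1 : ∑ s ∈ S, g s = (∑ s ∈ S, D (f (s - 1))) + ∑ s ∈ S, E (f s) := by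
      simp [hgdef, Finset.sum_add_distrib]
    have h2 : ∑ s ∈ S, E (f s) = ∑ r ∈ f.support, E (f r) :=
      (Finset.sum_subset hsupS (fun s _ hs => by
        rw [Finsupp.notMem_support_iff.mp hs, map_zero])).symm
    have h3 : ∑ s ∈ S, D (f (s - 1)) = ∑ s ∈ f.support.image (· + 1), D (f (s - 1)) :=
      (Finset.sum_subset himgS (fun s _ hs => by rw [hnotimg s hs, map_zero])).symm
    have h4 : ∑ s ∈ f.support.image (· + 1), D (f (s - 1)) = ∑ r ∈ f.support, D (f r) := by
      rw [Finset.sum_image (fun a _ b _ h => by omega)]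
      exact Finset.sum_congr rfl fun r _ => by rw [add_sub_cancel_right]
    have h5 : (∑ r ∈ f.support, D (f r)) + ∑ r ∈ f.support, E (f r) = (D + E) y := by
      rw [← hfsum]
      simp [Finsupp.sum, map_sum, Finset.sum_add_distrib]
    rw [h1, h2, h3, h4, h5, ← hyeq]
  -- independence of the columns
  have hindep : iSupIndep (fun s : ℤ => Apq s (k - s)) := by
    have h := hinternal.submodule_iSupIndep
    have heq : (fun s : ℤ => Apq s (k - s)) =
        (fun pq : ℤ × ℤ => Apq pq.1 pq.2) ∘ (fun s : ℤ => (s, k - s)) := rfl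
    rw [heq]
    exact h.comp (fun a b hab => by simpa using congrArg Prod.fst hab)
  -- extract the component equations
  have hhmem : ∀ s : ℤ, (g s - if s = p then θ else 0) ∈ Apq s (k - s) := by
    intro s
    refine sub_mem (hgmem s) ?_
    by_cases h : s = p
    · rw [if_pos h]; exact hcast p s q (k - s) θ h.symm (by omega) hθ
    · rw [if_neg h]; exact zero_mem _
  have hhsum : ∑ s ∈ S, (g s - if s = p then θ else 0) = 0 := by
    rw [Finset.sum_sub_distrib, hsumS, Finset.sum_ite_eq' S p fun _ => θ, if_pos hpS, sub_self]
  have hh0 := sum_indep_eq_zero hindep S _ hhmem hhsum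
  have hgp : g p = θ := by
    have := hh0 p hpS; rw [if_pos rfl] at this; exact sub_eq_zero.mp this
  have hg0 : ∀ s : ℤ, s ≠ p → g s = 0 := by
    intro s hs
    by_cases hsS : s ∈ S
    · have := hh0 s hsS; rw [if_neg hs] at this; simpa using this
    · have h1 : f s = 0 := Finsupp.notMem_support_iff.mp (fun h => hsS (hsupS h))
      have h2 : f (s - 1) = 0 := hnotimg s (fun h => hsS (himgS h))
      simp [hgdef, h1, h2]
  -- support bounds
  obtain ⟨N, hN⟩ := f.support.finite_toSet.bddAbove
  obtain ⟨M, hM⟩ := f.support.finite_toSet.bddBelow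
  have hfN : ∀ r : ℤ, N < r → f r = 0 := fun r hr =>
    Finsupp.notMem_support_iff.mp (fun h => absurd (hN h) (by omega))
  have hfM : ∀ r : ℤ, r < M → f r = 0 := fun r hr =>
    Finsupp.notMem_support_iff.mp (fun h => absurd (hM h) (by omega))
  -- descending induction: components in degrees ≥ p
  have QH : ∀ s : ℤ, p ≤ s →
      ∃ w ∈ Apq (s - 1) (k - 1 - s), ∃ z ∈ Apq s (k - 2 - s), f s = D w + E z := by
    have hm1 : N + 1 ≤ max (N + 1) p := le_max_left _ _
    have hm2 : p ≤ max (N + 1) p := le_max_right _ _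
    have key : ∀ s : ℤ, s ≤ max (N + 1) p → (p ≤ s →
        ∃ w ∈ Apq (s - 1) (k - 1 - s), ∃ z ∈ Apq s (k - 2 - s), f s = D w + E z) := by
      refine Int.le_induction_down ?_ ?_
      · intro _
        exact ⟨0, zero_mem _, 0, zero_mem _, by rw [hfN _ (by omega)]; simp⟩
      · intro n hn ih hpn1
        obtain ⟨w, hw, z, hz, hfn⟩ := ih (by omega)
        have hgn : D (f (n - 1)) + E (f n) = 0 := hg0 n (by omega)
        have hEfn : E (f n) = -D (E w) := by
          rw [hfn, map_add, hEE z, add_zero, hED w]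
        have hDclosed : D (f (n - 1) - E w) = 0 := by
          rw [map_sub, sub_eq_zero]
          rw [hEfn] at hgn
          exact eq_of_sub_eq_zero (by rwa [← sub_eq_add_neg] at hgn)
        have hmem : f (n - 1) - E w ∈ Apq (n - 1) (k - n) :=
          sub_mem (hcast (n - 1) (n - 1) (k - 1 - (n - 1)) (k - n) _ rfl (by ring) (hf (n - 1)))
            (hcast (n - 1) (n - 1) (k - 1 - n + 1) (k - n) _ rfl (by ring) (hEgr _ _ _ hw))
        obtain ⟨w', hw', hw'eq⟩ := hDP (n - 1) (k - n) (by omega) _ hmem hDclosed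
        exact ⟨w', hcast (n - 1 - 1) (n - 1 - 1) (k - n) (k - 1 - (n - 1)) _ rfl (by ring) hw',
          w, hcast (n - 1) (n - 1) (k - 1 - n) (k - 2 - (n - 1)) _ rfl (by ring) hw,
          sub_eq_iff_eq_add.mp hw'eq⟩
    intro s hs
    rcases le_or_gt s (max (N + 1) p) with h | h
    · exact key s h hs
    · exact ⟨0, zero_mem _, 0, zero_mem _, by rw [hfN _ (by omega)]; simp⟩
  -- ascending induction: components in degrees ≤ p - 1
  have QL : ∀ s : ℤ, s ≤ p - 1 →
      ∃ z ∈ Apq s (k - 2 - s), ∃ w ∈ Apq (s - 1) (k - 1 - s), f s = E z + D w := by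
    have hm1 : min (M - 1) (p - 1) ≤ M - 1 := min_le_left _ _
    have hm2 : min (M - 1) (p - 1) ≤ p - 1 := min_le_right _ _
    have key : ∀ s : ℤ, min (M - 1) (p - 1) ≤ s → (s ≤ p - 1 →
        ∃ z ∈ Apq s (k - 2 - s), ∃ w ∈ Apq (s - 1) (k - 1 - s), f s = E z + D w) := by
      refine Int.le_induction ?_ ?_
      · intro _
        exact ⟨0, zero_mem _, 0, zero_mem _, by rw [hfM _ (by omega)]; simp⟩
      · intro n hn ih hn1
        obtain ⟨z, hz, w, hw, hfn⟩ := ih (by omega)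
        have hgn : D (f (n + 1 - 1)) + E (f (n + 1)) = 0 := hg0 (n + 1) (by omega)
        rw [add_sub_cancel_right] at hgn
        have hDfn : D (f n) = D (E z) := by
          rw [hfn, map_add, hDD w, add_zero]
        have hEclosed : E (f (n + 1) - D z) = 0 := by
          rw [map_sub, sub_eq_zero, hED z, ← hDfn]
          exact eq_neg_of_add_eq_zero_right hgn
        have hmem : f (n + 1) - D z ∈ Apq (n + 1) (k - 2 - n) :=
          sub_mem (hcast (n + 1) (n + 1) (k - 1 - (n + 1)) (k - 2 - n) _ rfl (by ring)
              (hf (n + 1)))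
            (hcast (n + 1) (n + 1) (k - 2 - n) (k - 2 - n) _ rfl rfl (hDgr _ _ _ hz))
        obtain ⟨z', hz', hz'eq⟩ := hEP (n + 1) (k - 2 - n) (by omega) _ hmem hEclosed
        exact ⟨z', hcast (n + 1) (n + 1) (k - 2 - n - 1) (k - 2 - (n + 1)) _ rfl (by ring) hz',
          z, hcast n (n + 1 - 1) (k - 2 - n) (k - 1 - (n + 1)) _ (by ring) (by ring) hz,
          sub_eq_iff_eq_add.mp hz'eq⟩
    intro s hs
    rcases le_or_gt (min (M - 1) (p - 1)) s with h | h
    · exact key s h hs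
    · exact ⟨0, zero_mem _, 0, zero_mem _, by rw [hfM _ (by omega)]; simp⟩
  -- combine
  obtain ⟨w1, hw1, z1, hz1, hfp⟩ := QH p le_rfl
  obtain ⟨z2, hz2, w2, hw2, hfp1⟩ := QL (p - 1) le_rfl
  refine ⟨z2 - w1, sub_mem
    (hcast (p - 1) (p - 1) (k - 2 - (p - 1)) (q - 1) _ rfl (by omega) hz2)
    (hcast (p - 1) (p - 1) (k - 1 - p) (q - 1) _ rfl (by omega) hw1), ?_⟩
  have hθg : θ = D (f (p - 1)) + E (f p) := hgp.symm
  rw [hθg, hfp1, hfp]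
  simp only [map_add, map_sub, hDD, hEE, hED]
  abel
end
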